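/- D_1 = {(0,0), (1,0), (1,1)}, and for every integer n ≥ 2, D_n is the disjoint union of D_{n−1} and P_{n−1} \ P_n; that is, D_n = D_{n−1} ⊔ (P_{n−1} \ P_n). -/
import Mathlib
set_option maxHeartbeats 1000000


open Pointwise

/-- The submonoid `σ_Z ⊂ ℤ²` of pairs `(a,b)` with `0 ≤ b` and `3b ≤ 4a`. -/
def sigmaZ : Set (ℤ × ℤ) := {a : ℤ × ℤ | 0 ≤ a.2 ∧ 3 * a.2 ≤ 4 * a.1}

/-- The point `p_n`. -/
def pPt (n : ℤ) : ℤ × ℤ := if Odd n then ((n + 3) / 2, 0) else (n / 2 + 1, 0)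

/-- The point `s_n`. -/
def sPt (n : ℤ) : ℤ × ℤ :=
  if Odd n then (3 * (n + 1) / 2, 2 * (n + 1)) else (3 * (n + 2) / 2, 2 * (n + 2))

/-- The point `q^i = (n+1-i, n-2i)`. -/
def qPt (n i : ℤ) : ℤ × ℤ := (n + 1 - i, n - 2 * i)

/-- The point `r^j = (n+1+j, n+1+2j)`. -/
def rPt (n j : ℤ) : ℤ × ℤ := (n + 1 + j, n + 1 + 2 * j)

/-- The set `P_n ⊂ ℤ²`. -/
def Pset (n : ℤ) : Set (ℤ × ℤ) :=
  {pPt n, sPt n}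
    ∪ {x | ∃ i : ℤ, 0 ≤ i ∧ i ≤ (if Odd n then (n - 1) / 2 else (n - 2) / 2) ∧ x = qPt n i}
    ∪ {x | ∃ j : ℤ, 0 ≤ j ∧ j ≤ (if Odd n then (n - 1) / 2 else n / 2) ∧ x = rPt n j}

/-- The set `D_n = σ_Z \ (P_n + σ_Z)`, where `+` is pointwise addition of sets. -/
def Dset (n : ℤ) : Set (ℤ × ℤ) := sigmaZ \ (Pset n + sigmaZ)

section Aux

lemma zero_mem_sigmaZ : ((0,0) : ℤ × ℤ) ∈ sigmaZ := by
  constructor <;> norm_num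

lemma subset_add_sigmaZ (P : Set (ℤ × ℤ)) : P ⊆ P + sigmaZ := fun p hp =>
  ⟨p, hp, (0,0), zero_mem_sigmaZ, by simp⟩

lemma mem_addSigma (A : Set (ℤ × ℤ)) (x : ℤ × ℤ) :
    x ∈ A + sigmaZ ↔ ∃ p ∈ A, p.2 ≤ x.2 ∧ 4*p.1 - 3*p.2 ≤ 4*x.1 - 3*x.2 := by
  constructor
  · rintro ⟨⟨p1,p2⟩, hp, ⟨s1,s2⟩, hs, rfl⟩
    obtain ⟨h1, h2⟩ := hs
    exact ⟨(p1,p2), hp, by simp at h1 h2 ⊢; omega, by simp at h1 h2 ⊢; omega⟩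
  · rintro ⟨⟨p1,p2⟩, hp, h1, h2⟩
    refine ⟨(p1,p2), hp, x - (p1,p2), ⟨?_, ?_⟩, by ring⟩ <;> simp at h1 h2 ⊢ <;> omega

lemma mem_Pset_iff (n : ℤ) (x : ℤ × ℤ) :
    x ∈ Pset n ↔ ((x = pPt n ∨ x = sPt n) ∨
      (∃ i : ℤ, 0 ≤ i ∧ i ≤ (if Odd n then (n - 1) / 2 else (n - 2) / 2) ∧ x = qPt n i)) ∨
      (∃ j : ℤ, 0 ≤ j ∧ j ≤ (if Odd n then (n - 1) / 2 else n / 2) ∧ x = rPt n j) := by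
  simp only [Pset, Set.mem_union, Set.mem_insert_iff, Set.mem_singleton_iff, Set.mem_setOf_eq]

lemma mem_Pset_odd (n a b : ℤ) (h2 : n % 2 = 1) :
    (a, b) ∈ Pset n ↔
      (2*a = n+3 ∧ b = 0) ∨ (2*a = 3*n+3 ∧ b = 2*n+2) ∨
      (b = 2*a - n - 2 ∧ n+3 ≤ 2*a ∧ a ≤ n+1) ∨
      (b = 2*a - n - 1 ∧ n+1 ≤ a ∧ 2*a ≤ 3*n+1) := by
  have ho : Odd n := Int.odd_iff.mpr h2
  rw [mem_Pset_iff]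
  simp only [pPt, sPt, qPt, rPt, if_pos ho, Prod.mk.injEq]
  constructor
  · rintro ((⟨ha,hb⟩|⟨ha,hb⟩)|⟨i,h3,h4,ha,hb⟩|⟨j,h3,h4,ha,hb⟩) <;> omega
  · rintro (⟨ha,hb⟩|⟨ha,hb⟩|⟨hb,h3,h4⟩|⟨hb,h3,h4⟩)
    · exact Or.inl (Or.inl (Or.inl ⟨by omega, hb⟩))
    · exact Or.inl (Or.inl (Or.inr ⟨by omega, by omega⟩))
    · exact Or.inl (Or.inr ⟨n+1-a, by omega, by omega, by omega, by omega⟩)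
    · exact Or.inr ⟨a-n-1, by omega, by omega, by omega, by omega⟩

lemma mem_Pset_even (n a b : ℤ) (h2 : n % 2 = 0) :
    (a, b) ∈ Pset n ↔
      (2*a = n+2 ∧ b = 0) ∨ (2*a = 3*n+6 ∧ b = 2*n+4) ∨
      (b = 2*a - n - 2 ∧ n+4 ≤ 2*a ∧ a ≤ n+1) ∨
      (b = 2*a - n - 1 ∧ n+1 ≤ a ∧ 2*a ≤ 3*n+2) := by
  have ho : ¬ Odd n := by rw [Int.odd_iff]; omega
  rw [mem_Pset_iff]
  simp only [pPt, sPt, qPt, rPt, if_neg ho, Prod.mk.injEq]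
  constructor
  · rintro ((⟨ha,hb⟩|⟨ha,hb⟩)|⟨i,h3,h4,ha,hb⟩|⟨j,h3,h4,ha,hb⟩) <;> omega
  · rintro (⟨ha,hb⟩|⟨ha,hb⟩|⟨hb,h3,h4⟩|⟨hb,h3,h4⟩)
    · exact Or.inl (Or.inl (Or.inl ⟨by omega, hb⟩))
    · exact Or.inl (Or.inl (Or.inr ⟨by omega, by omega⟩))
    · exact Or.inl (Or.inr ⟨n+1-a, by omega, by omega, by omega, by omega⟩)
    · exact Or.inr ⟨a-n-1, by omega, by omega, by omega, by omega⟩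

lemma dom_odd (n a b : ℤ) (h1 : 1 ≤ n) (h2 : n % 2 = 1) :
    (a, b) ∈ Pset n + sigmaZ ↔ 0 ≤ b ∧ 3*b ≤ 4*a ∧
      (2*n+2 ≤ b ∨
       (b ≤ n ∧ b % 2 = 0 ∧ 2*n+6 ≤ 4*a-2*b) ∨
       (b ≤ n ∧ b % 2 = 1 ∧ 2*n+4 ≤ 4*a-2*b) ∨
       (n+1 ≤ b ∧ b ≤ 2*n+1 ∧ b % 2 = 0 ∧ 2*n+2 ≤ 4*a-2*b) ∨
       (n+1 ≤ b ∧ b ≤ 2*n+1 ∧ b % 2 = 1 ∧ 2*n+4 ≤ 4*a-2*b)) := by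
  rw [mem_addSigma]
  constructor
  · rintro ⟨⟨p1,p2⟩, hp, hd1, hd2⟩
    rw [mem_Pset_odd n p1 p2 h2] at hp
    simp only at hd1 hd2
    omega
  · rintro ⟨hb, hu, (hc|hc|hc|hc|hc)⟩
    · exact ⟨((3*n+3)/2, 2*n+2), (mem_Pset_odd n _ _ h2).mpr (by omega), by dsimp only; omega,
        by dsimp only; omega⟩
    · by_cases h0 : b = 0
      · exact ⟨((n+3)/2, 0), (mem_Pset_odd n _ _ h2).mpr (by omega), by dsimp only; omega,
          by dsimp only; omega⟩
      · exact ⟨((n+b+1)/2, b-1), (mem_Pset_odd n _ _ h2).mpr (by omega), by dsimp only; omega,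
          by dsimp only; omega⟩
    · exact ⟨((n+b+2)/2, b), (mem_Pset_odd n _ _ h2).mpr (by omega), by dsimp only; omega,
        by dsimp only; omega⟩
    · exact ⟨((n+b+1)/2, b), (mem_Pset_odd n _ _ h2).mpr (by omega), by dsimp only; omega,
        by dsimp only; omega⟩
    · exact ⟨((n+b)/2, b-1), (mem_Pset_odd n _ _ h2).mpr (by omega), by dsimp only; omega,
        by dsimp only; omega⟩

lemma dom_even (n a b : ℤ) (h1 : 2 ≤ n) (h2 : n % 2 = 0) :
    (a, b) ∈ Pset n + sigmaZ ↔ 0 ≤ b ∧ 3*b ≤ 4*a ∧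
      (2*n+4 ≤ b ∨
       (b ≤ n ∧ b % 2 = 0 ∧ 2*n+4 ≤ 4*a-2*b) ∨
       (b ≤ n ∧ b % 2 = 1 ∧ 2*n+6 ≤ 4*a-2*b) ∨
       (n+1 ≤ b ∧ b ≤ 2*n+1 ∧ b % 2 = 1 ∧ 2*n+2 ≤ 4*a-2*b) ∨
       (n+1 ≤ b ∧ b ≤ 2*n+2 ∧ b % 2 = 0 ∧ 2*n+4 ≤ 4*a-2*b) ∨
       (b = 2*n+3 ∧ 1 ≤ 4*a-3*b)) := by
  rw [mem_addSigma]
  constructor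
  · rintro ⟨⟨p1,p2⟩, hp, hd1, hd2⟩
    rw [mem_Pset_even n p1 p2 h2] at hp
    simp only at hd1 hd2
    omega
  · rintro ⟨hb, hu, (hc|hc|hc|hc|hc|hc)⟩
    · exact ⟨((3*n+6)/2, 2*n+4), (mem_Pset_even n _ _ h2).mpr (by omega), by dsimp only; omega,
        by dsimp only; omega⟩
    · by_cases h0 : b = 0
      · exact ⟨(n/2+1, 0), (mem_Pset_even n _ _ h2).mpr (by omega), by dsimp only; omega,
          by dsimp only; omega⟩
      · exact ⟨((n+b+2)/2, b), (mem_Pset_even n _ _ h2).mpr (by omega), by dsimp only; omega,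
          by dsimp only; omega⟩
    · by_cases h0 : b = 1
      · exact ⟨(n/2+1, 0), (mem_Pset_even n _ _ h2).mpr (by omega), by dsimp only; omega,
          by dsimp only; omega⟩
      · exact ⟨((n+b+1)/2, b-1), (mem_Pset_even n _ _ h2).mpr (by omega), by dsimp only; omega,
          by dsimp only; omega⟩
    · exact ⟨((n+b+1)/2, b), (mem_Pset_even n _ _ h2).mpr (by omega), by dsimp only; omega,
        by dsimp only; omega⟩
    · exact ⟨((n+b)/2, b-1), (mem_Pset_even n _ _ h2).mpr (by omega), by dsimp only; omega,
        by dsimp only; omega⟩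
    · exact ⟨((3*n+2)/2, 2*n+1), (mem_Pset_even n _ _ h2).mpr (by omega), by dsimp only; omega,
        by dsimp only; omega⟩

end Aux

/-- `D_1 = {(0,0), (1,0), (1,1)}` and, for every integer `n ≥ 2`,
`D_n` is the disjoint union of `D_{n−1}` and `P_{n−1} \ P_n`. -/
theorem Dset_structure :
    Dset 1 = {((0 : ℤ), (0 : ℤ)), (1, 0), (1, 1)} ∧
    ∀ n : ℕ, 2 ≤ n →
      Dset (n : ℤ) = Dset ((n : ℤ) - 1) ∪ (Pset ((n : ℤ) - 1) \ Pset (n : ℤ)) ∧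
      Disjoint (Dset ((n : ℤ) - 1)) (Pset ((n : ℤ) - 1) \ Pset (n : ℤ)) := by
  constructor
  · ext ⟨a, b⟩
    simp only [Dset, Set.mem_diff, Set.mem_insert_iff, Set.mem_singleton_iff, Prod.mk.injEq]
    rw [dom_odd 1 a b (by norm_num) (by norm_num)]
    simp only [sigmaZ, Set.mem_setOf_eq]
    omega
  · intro n hn
    have hn2 : (2:ℤ) ≤ (n:ℤ) := by exact_mod_cast hn
    have hdisj : Disjoint (Dset ((n:ℤ) - 1)) (Pset ((n:ℤ) - 1) \ Pset (n:ℤ)) := by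
      rw [Set.disjoint_left]
      rintro x hx hy
      exact hx.2 (subset_add_sigmaZ _ hy.1)
    refine ⟨?_, hdisj⟩
    rcases Int.emod_two_eq_zero_or_one (n:ℤ) with h2 | h2
    · ext ⟨a, b⟩
      simp only [Dset, Set.mem_union, Set.mem_diff]
      rw [dom_even (n:ℤ) a b hn2 h2, dom_odd ((n:ℤ)-1) a b (by omega) (by omega),
          mem_Pset_even (n:ℤ) a b h2, mem_Pset_odd ((n:ℤ)-1) a b (by omega)]
      simp only [sigmaZ, Set.mem_setOf_eq]
      omega
    · ext ⟨a, b⟩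
      simp only [Dset, Set.mem_union, Set.mem_diff]
      rw [dom_odd (n:ℤ) a b (by omega) h2, dom_even ((n:ℤ)-1) a b (by omega) (by omega),
          mem_Pset_odd (n:ℤ) a b h2, mem_Pset_even ((n:ℤ)-1) a b (by omega)]
      simp only [sigmaZ, Set.mem_setOf_eq]
      omega
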